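/- Let a > 0, λ > 0, C > 0, w > 0, and let (t_k)_{k∈ℕ} be a strictly increasing sequence of nonnegative real numbers that is bounded above. Then it is NOT the case that w·e^{−λ·t_{k+1}} ≤ C·(e^{a·(t_{k+1} − t_k)} − 1)² holds for every k ∈ ℕ. -/
import Mathlib


/-- Contradiction argument excluding Zeno behavior: a strictly increasing,
bounded-above sequence of nonnegative triggering instants cannot satisfy
`w·e^{−λt_{k+1}} ≤ C·(e^{a(t_{k+1}−t_k)} − 1)²` for every `k`. -/
theorem stmt10 (a lam C w : ℝ) (ha : 0 < a) (hlam : 0 < lam) (hC : 0 < C)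
    (hw : 0 < w) (t : ℕ → ℝ) (hmono : StrictMono t) (hpos : ∀ k, 0 ≤ t k)
    (hbdd : BddAbove (Set.range t)) :
    ¬ (∀ k : ℕ, w * Real.exp (-lam * t (k + 1)) ≤
        C * (Real.exp (a * (t (k + 1) - t k)) - 1) ^ 2) := by
  intro h
  set L := ⨆ k, t k with hL
  have hle : ∀ k, t k ≤ L := fun k => le_ciSup hbdd k
  have hconv : Filter.Tendsto t Filter.atTop (nhds L) :=
    tendsto_atTop_ciSup hmono.monotone hbdd
  have hdiff : Filter.Tendsto (fun k => t (k + 1) - t k) Filter.atTop (nhds 0) := by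
    have h1 : Filter.Tendsto (fun k => t (k + 1)) Filter.atTop (nhds L) :=
      hconv.comp (Filter.tendsto_add_atTop_nat 1)
    simpa using h1.sub hconv
  have hrhs : Filter.Tendsto (fun k => C * (Real.exp (a * (t (k + 1) - t k)) - 1) ^ 2)
      Filter.atTop (nhds 0) := by
    have : Filter.Tendsto (fun k => Real.exp (a * (t (k + 1) - t k)) - 1)
        Filter.atTop (nhds 0) := by
      have := (Real.continuous_exp.tendsto 0).comp (by simpa using hdiff.const_mul a)
      simpa using this.sub_const 1
    simpa using (this.pow 2).const_mul C
  have hlb : ∀ k, w * Real.exp (-lam * L) ≤ w * Real.exp (-lam * t (k + 1)) := by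
    intro k
    apply mul_le_mul_of_nonneg_left _ hw.le
    apply Real.exp_le_exp.mpr
    nlinarith [hle (k + 1), hlam]
  have hε : 0 < w * Real.exp (-lam * L) := mul_pos hw (Real.exp_pos _)
  have := (hrhs.eventually (eventually_lt_nhds hε)).exists
  obtain ⟨k, hk⟩ := this
  exact absurd (le_trans (hlb k) (h k)) (not_le.mpr hk)
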